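/- Let Z be a real reflexive Banach space continuously and densely embedded in a real reflexive Banach space V, τ > 0, and let R : Z → [0,∞] be proper, convex, lower semicontinuous and positively 1-homogeneous. Suppose ξ ∈ Z*, w ∈ Z with ‖w‖_V ≤ τ, and ζ ∈ V* ⊆ Z* satisfy: ζ ∈ ∂I_τ(w), τ·dist_{V*}(−ξ, ∂R(0)) = ⟨ζ, w⟩, and R(v) ≥ −⟨ζ + ξ, v⟩ for all v ∈ Z. Then dist_{V*}(−ξ, ∂R(0)) = ‖ζ‖_{V*}, and consequently the discrete complementarity relation (τ − ‖w‖_V)·dist_{V*}(−ξ, ∂R(0)) = 0 holds together with (τ − ‖w‖_V)/τ ≥ 0 and (τ − ‖w‖_V)/τ + ‖w‖_V/τ = 1. -/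

import Mathlib

open Set Filter

variable {Z V : Type*} [NormedAddCommGroup Z] [NormedSpace ℝ Z]
  [NormedAddCommGroup V] [NormedSpace ℝ V]

/-- `η ∈ Z*` is bounded with respect to the `V`-norm on `Z` (i.e. `η` belongs to `V*`,
identified with a subspace of `Z*` via the dense embedding `ι : Z ↪ V`). -/
def InVdual (ι : Z →L[ℝ] V) (η : Z →L[ℝ] ℝ) : Prop :=
  ∃ C : ℝ, ∀ z : Z, |η z| ≤ C * ‖ι z‖

/-- The `V*`-norm of `η ∈ Z*`: `‖η‖_{V*} = sup{⟨η, v⟩ : v ∈ Z, ‖v‖_V ≤ 1}`. -/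
noncomputable def VdualNorm (ι : Z →L[ℝ] V) (η : Z →L[ℝ] ℝ) : ℝ :=
  sSup {r : ℝ | ∃ z : Z, ‖ι z‖ ≤ 1 ∧ r = η z}

/-- The extended distance `dist_{V*}(η, A) = inf{‖η − w‖_{V*} : w ∈ A, η − w ∈ V*}`,
interpreted as `+∞` (in `EReal`) if no such `w` exists. -/
noncomputable def distVdual (ι : Z →L[ℝ] V) (η : Z →L[ℝ] ℝ) (A : Set (Z →L[ℝ] ℝ)) : EReal :=
  sInf {r : EReal | ∃ w ∈ A, InVdual ι (η - w) ∧ r = ((VdualNorm ι (η - w) : ℝ) : EReal)}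

/-- The indicator functional `I_τ` of `{v ∈ Z : ‖v‖_V ≤ τ}`, with values in `EReal`. -/
noncomputable def indic (ι : Z →L[ℝ] V) (τ : ℝ) (v : Z) : EReal :=
  if ‖ι v‖ ≤ τ then 0 else ⊤

/-- The subdifferential of an extended-real-valued convex functional `f : Z → EReal` at `x`:
`∂f(x) = {η ∈ Z* : f(y) ≥ f(x) + ⟨η, y − x⟩ for all y ∈ Z}`. -/
def subdiffE (f : Z → EReal) (x : Z) : Set (Z →L[ℝ] ℝ) :=
  {η | ∀ y : Z, f x + ((η (y - x) : ℝ) : EReal) ≤ f y}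

/-- The Fenchel conjugate `f*(η) = sup_{x ∈ Z} (⟨η, x⟩ − f(x))`, with values in `EReal`. -/
noncomputable def conjE (f : Z → EReal) (η : Z →L[ℝ] ℝ) : EReal :=
  ⨆ x : Z, ((η x : ℝ) : EReal) - f x

/-- **Discrete complementarity.** Let `Z` be a real reflexive Banach space continuously and
densely embedded in a real reflexive Banach space `V` (via `ι`), `τ > 0`, and let
`R : Z → [0,∞]` be proper, convex, lower semicontinuous and positively 1-homogeneous.
Suppose `ξ ∈ Z*`, `w ∈ Z` with `‖w‖_V ≤ τ`, and `ζ ∈ V* ⊆ Z*` satisfy `ζ ∈ ∂I_τ(w)`,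
`τ·dist_{V*}(−ξ, ∂R(0)) = ⟨ζ, w⟩`, and `R(v) ≥ −⟨ζ + ξ, v⟩` for all `v ∈ Z`. Then
`dist_{V*}(−ξ, ∂R(0)) = ‖ζ‖_{V*}`, and consequently
`(τ − ‖w‖_V)·dist_{V*}(−ξ, ∂R(0)) = 0`, `(τ − ‖w‖_V)/τ ≥ 0` and
`(τ − ‖w‖_V)/τ + ‖w‖_V/τ = 1`. -/
theorem stmt12 [CompleteSpace Z] [CompleteSpace V]
    (hreflZ : Function.Surjective ⇑(NormedSpace.inclusionInDoubleDual ℝ Z))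
    (hreflV : Function.Surjective ⇑(NormedSpace.inclusionInDoubleDual ℝ V))
    (ι : Z →L[ℝ] V) (hinj : Function.Injective ι) (hdense : DenseRange ι)
    (τ : ℝ) (hτ : 0 < τ)
    (R : Z → EReal) (hR0 : ∀ v : Z, 0 ≤ R v) (hRproper : ∃ v : Z, R v ≠ ⊤)
    (hRconvex : ∀ x y : Z, ∀ a b : ℝ, 0 ≤ a → 0 ≤ b → a + b = 1 →
      R (a • x + b • y) ≤ (a : EReal) * R x + (b : EReal) * R y)
    (hRlsc : LowerSemicontinuous R)
    (hRhom : ∀ (v : Z) (l : ℝ), 0 < l → R (l • v) = (l : EReal) * R v)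
    (ξ ζ : Z →L[ℝ] ℝ) (w : Z) (hw : ‖ι w‖ ≤ τ)
    (hζV : InVdual ι ζ)
    (hζsub : ζ ∈ subdiffE (indic ι τ) w)
    (hident : (τ : EReal) * distVdual ι (-ξ) (subdiffE R 0) = ((ζ w : ℝ) : EReal))
    (hlower : ∀ v : Z, ((-(ζ v + ξ v) : ℝ) : EReal) ≤ R v) :
    distVdual ι (-ξ) (subdiffE R 0) = ((VdualNorm ι ζ : ℝ) : EReal) ∧
    ((τ - ‖ι w‖ : ℝ) : EReal) * distVdual ι (-ξ) (subdiffE R 0) = 0 ∧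
    0 ≤ (τ - ‖ι w‖) / τ ∧
    (τ - ‖ι w‖) / τ + ‖ι w‖ / τ = 1 := by
    classical
  -- The set whose supremum is the `V*`-norm of `ζ`.
  set S : Set ℝ := {r : ℝ | ∃ z : Z, ‖ι z‖ ≤ 1 ∧ r = ζ z} with hS
  have hmemS : ∀ z : Z, ‖ι z‖ ≤ 1 → ζ z ∈ S := fun z hz => ⟨z, hz, rfl⟩
  have h0S : (0 : ℝ) ∈ S := by
    refine ⟨0, ?_, ?_⟩ <;> simp
  have hbdd : BddAbove S := by
    obtain ⟨C, hC⟩ := hζV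
    refine ⟨|C|, fun r hr => ?_⟩
    obtain ⟨z, hz, rfl⟩ := hr
    calc ζ z ≤ |ζ z| := le_abs_self _
      _ ≤ C * ‖ι z‖ := hC z
      _ ≤ |C| * ‖ι z‖ := mul_le_mul_of_nonneg_right (le_abs_self C) (norm_nonneg _)
      _ ≤ |C| * 1 := mul_le_mul_of_nonneg_left hz (abs_nonneg C)
      _ = |C| := mul_one _
  -- From `ζ ∈ ∂I_τ(w)` : `ζ z ≤ ζ w / τ` whenever `‖ι z‖ ≤ 1`.
  have hkey : ∀ z : Z, ‖ι z‖ ≤ 1 → ζ z ≤ ζ w / τ := by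
    intro z hz
    have hτz : ‖ι (τ • z)‖ ≤ τ := by
      rw [map_smul, norm_smul, Real.norm_eq_abs, abs_of_pos hτ]
      calc τ * ‖ι z‖ ≤ τ * 1 := mul_le_mul_of_nonneg_left hz hτ.le
        _ = τ := mul_one τ
    have h1 := hζsub (τ • z)
    rw [indic, indic, if_pos hw, if_pos hτz, zero_add] at h1
    have h2 : ζ (τ • z - w) ≤ 0 := by exact_mod_cast h1
    rw [map_sub, map_smul, smul_eq_mul, sub_nonpos] at h2
    rw [le_div_iff₀ hτ, mul_comm]
    exact h2
  -- Hence `VdualNorm ι ζ = ζ w / τ`.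
  have hle1 : VdualNorm ι ζ ≤ ζ w / τ := by
    refine csSup_le ⟨0, h0S⟩ ?_
    rintro r ⟨z, hz, rfl⟩
    exact hkey z hz
  have hle2 : ζ w / τ ≤ VdualNorm ι ζ := by
    have hmem : ζ w / τ ∈ S := by
      refine ⟨τ⁻¹ • w, ?_, ?_⟩
      · rw [map_smul, norm_smul, Real.norm_eq_abs, abs_of_pos (inv_pos.mpr hτ)]
        rw [inv_mul_le_iff₀ hτ]
        linarith
      · rw [map_smul, smul_eq_mul, div_eq_inv_mul]
    exact le_csSup hbdd hmem
  have hNval : VdualNorm ι ζ = ζ w / τ := le_antisymm hle1 hle2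
  have hζw : ζ w = τ * VdualNorm ι ζ := by
    rw [hNval]; field_simp
  have hN0 : 0 ≤ VdualNorm ι ζ := le_csSup hbdd h0S
  -- `ζ w ≤ VdualNorm ι ζ * ‖ι w‖`.
  have hζwle : ζ w ≤ VdualNorm ι ζ * ‖ι w‖ := by
    rcases eq_or_lt_of_le (norm_nonneg (ι w)) with h0 | hpos
    · have hw0 : w = 0 := by
        apply hinj
        rw [map_zero]
        exact norm_eq_zero.mp h0.symm
      rw [hw0, map_zero]
      exact mul_nonneg hN0 (norm_nonneg _)
    · have hz1 : ‖ι (‖ι w‖⁻¹ • w)‖ ≤ 1 := by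
        rw [map_smul, norm_smul, Real.norm_eq_abs, abs_of_pos (inv_pos.mpr hpos),
          inv_mul_cancel₀ hpos.ne']
      have := le_csSup hbdd (hmemS _ hz1)
      rw [map_smul, smul_eq_mul] at this
      calc ζ w = (‖ι w‖⁻¹ * ζ w) * ‖ι w‖ := by field_simp
        _ ≤ VdualNorm ι ζ * ‖ι w‖ := mul_le_mul_of_nonneg_right this (norm_nonneg _)
  -- Identify the distance with the `V*`-norm of `ζ`, using `hident`.
  have hdist : distVdual ι (-ξ) (subdiffE R 0) = ((VdualNorm ι ζ : ℝ) : EReal) := by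
    rw [hζw] at hident
    generalize hgen : distVdual ι (-ξ) (subdiffE R 0) = d at hident ⊢
    induction d using EReal.rec with
    | bot =>
      rw [EReal.mul_bot_of_pos (by exact_mod_cast hτ)] at hident
      exact ((EReal.coe_ne_bot _) hident.symm).elim
    | coe r =>
      rw [← EReal.coe_mul] at hident
      have hr : τ * r = τ * VdualNorm ι ζ := by exact_mod_cast hident
      have : r = VdualNorm ι ζ := mul_left_cancel₀ hτ.ne' hr
      rw [this]
    | top =>
      rw [EReal.mul_top_of_pos (by exact_mod_cast hτ)] at hident
      exact ((EReal.coe_ne_top _) hident.symm).elim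
  refine ⟨hdist, ?_, ?_, ?_⟩
  · rw [hdist, ← EReal.coe_mul]
    have hmul : (τ - ‖ι w‖) * VdualNorm ι ζ = 0 := by
      nlinarith [hζwle, hζw, hN0, hw]
    exact_mod_cast congrArg (fun x : ℝ => (x : EReal)) hmul
  · exact div_nonneg (by linarith) hτ.le
  · rw [← add_div, sub_add_cancel]
    exact div_self hτ.ne'
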